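/- Let m ≥ 2, M ≥ 2, and N = m(M-1) + 1. Then there exists an automorphism φ of the free group F_N of rank N such that F_N ⋊_φ ℤ is isomorphic to F_M × ℤ, and the image of φ in Out(F_N) has order m. -/

import Mathlib

namespace Stmt13

open FreeGroup Multiplicative

variable (m' M'' : ℕ)

abbrev ι := (Fin (m' + 2) × Fin (M'' + 1)) ⊕ Unit

abbrev G := FreeGroup (ι m' M'')

def bb : G m' M'' := FreeGroup.of (Sum.inr ())

def fwd : ι m' M'' → G m' M''
  | Sum.inr _ => FreeGroup.of (Sum.inr ())
  | Sum.inl (j, i) =>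
      if h : (j : ℕ) + 1 < m' + 2 then FreeGroup.of (Sum.inl (⟨(j : ℕ) + 1, h⟩, i))
      else FreeGroup.of (Sum.inr ()) * FreeGroup.of (Sum.inl (0, i)) *
        (FreeGroup.of (Sum.inr ()))⁻¹

def bwd : ι m' M'' → G m' M''
  | Sum.inr _ => FreeGroup.of (Sum.inr ())
  | Sum.inl (j, i) =>
      if _ : 0 < (j : ℕ) then
        FreeGroup.of (Sum.inl (⟨(j : ℕ) - 1, lt_of_le_of_lt (Nat.sub_le _ _) j.isLt⟩, i))
      else (FreeGroup.of (Sum.inr ()))⁻¹ * FreeGroup.of (Sum.inl (Fin.last (m' + 1), i)) *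
        FreeGroup.of (Sum.inr ())

lemma bwd_fwd : (FreeGroup.lift (bwd m' M'')).comp (FreeGroup.lift (fwd m' M'')) =
    MonoidHom.id _ := by
  apply FreeGroup.ext_hom
  rintro (⟨j, i⟩ | u)
  · by_cases h : (j : ℕ) + 1 < m' + 2
    · simp only [MonoidHom.comp_apply, FreeGroup.lift_apply_of, fwd, dif_pos h, bwd,
        MonoidHom.id_apply]
      rw [dif_pos (by simp)]
      simp only [Nat.add_sub_cancel, Fin.eta]
    · have hj : j = Fin.last (m' + 1) := by
        ext
        simp only [Fin.val_last]
        omega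
      subst hj
      simp only [MonoidHom.comp_apply, FreeGroup.lift_apply_of, fwd, dif_neg h, MonoidHom.id_apply,
        _root_.map_mul, _root_.map_inv, bwd]
      rw [dif_neg (by simp)]
      group
  · simp [fwd, bwd]

lemma fwd_bwd : (FreeGroup.lift (fwd m' M'')).comp (FreeGroup.lift (bwd m' M'')) =
    MonoidHom.id _ := by
  apply FreeGroup.ext_hom
  rintro (⟨j, i⟩ | u)
  · by_cases h : 0 < (j : ℕ)
    · simp only [MonoidHom.comp_apply, FreeGroup.lift_apply_of, bwd, dif_pos h, fwd,
        MonoidHom.id_apply]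
      rw [dif_pos (by omega)]
      simp only [Nat.sub_add_cancel h, Fin.eta]
    · have hj : j = 0 := by
        ext
        simp only [Fin.val_zero]
        omega
      subst hj
      simp only [MonoidHom.comp_apply, FreeGroup.lift_apply_of, bwd, dif_neg h, MonoidHom.id_apply,
        _root_.map_mul, _root_.map_inv, fwd]
      rw [dif_neg (by simp [Fin.last])]
      group
  · simp [fwd, bwd]

/-- The automorphism. -/
def φ0 : MulAut (G m' M'') :=
  MonoidHom.toMulEquiv (FreeGroup.lift (fwd m' M'')) (FreeGroup.lift (bwd m' M''))
    (bwd_fwd m' M'') (fwd_bwd m' M'')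

@[simp] lemma φ0_apply (x : G m' M'') : φ0 m' M'' x = FreeGroup.lift (fwd m' M'') x := rfl

lemma φ0_b : φ0 m' M'' (bb m' M'') = bb m' M'' := by
  simp [φ0_apply, bb, fwd]

lemma φ0_c (j : Fin (m' + 2)) (i : Fin (M'' + 1)) (h : (j : ℕ) + 1 < m' + 2) :
    φ0 m' M'' (FreeGroup.of (Sum.inl (j, i))) = FreeGroup.of (Sum.inl (⟨(j : ℕ) + 1, h⟩, i)) := by
  simp only [φ0_apply, FreeGroup.lift_apply_of, fwd]
  rw [dif_pos h]

lemma φ0_top (i : Fin (M'' + 1)) :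
    φ0 m' M'' (FreeGroup.of (Sum.inl (Fin.last (m' + 1), i))) =
      bb m' M'' * FreeGroup.of (Sum.inl (0, i)) * (bb m' M'')⁻¹ := by
  simp only [φ0_apply, FreeGroup.lift_apply_of, fwd, bb]
  rw [dif_neg (by simp [Fin.val_last])]

lemma pow_bb (k : ℕ) : (φ0 m' M'' ^ k) (bb m' M'') = bb m' M'' := by
  induction k with
  | zero => rfl
  | succ k ih => rw [pow_succ, MulAut.mul_apply, φ0_b, ih]

lemma pow_c (k : ℕ) (j : Fin (m' + 2)) (i : Fin (M'' + 1)) (h : (j : ℕ) + k < m' + 2) :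
    (φ0 m' M'' ^ k) (FreeGroup.of (Sum.inl (j, i))) =
      FreeGroup.of (Sum.inl (⟨(j : ℕ) + k, h⟩, i)) := by
  induction k with
  | zero => simp
  | succ k ih =>
    rw [pow_succ', MulAut.mul_apply, ih (by omega), φ0_c m' M'' _ i (by simp; omega)]
    rfl

lemma φ0_pow_m : φ0 m' M'' ^ (m' + 2) = MulAut.conj (bb m' M'') := by
  apply MulEquiv.toMonoidHom_injective
  apply FreeGroup.ext_hom
  rintro (⟨j, i⟩ | u)
  · have hj : (j : ℕ) < m' + 2 := j.isLt
    have hpow : φ0 m' M'' ^ (m' + 2) = φ0 m' M'' ^ ((j : ℕ) + 1 + (m' + 1 - (j : ℕ))) := by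
      congr 1
      omega
    simp only [MulEquiv.coe_toMonoidHom, MulAut.conj_apply]
    rw [hpow, pow_add, pow_add, pow_one, MulAut.mul_apply, MulAut.mul_apply,
      pow_c m' M'' _ j i (by omega)]
    have hlast : ∀ hh : (j : ℕ) + (m' + 1 - (j : ℕ)) < m' + 2,
        (⟨(j : ℕ) + (m' + 1 - (j : ℕ)), hh⟩ : Fin (m' + 2)) = Fin.last (m' + 1) := by
      intro hh
      ext
      simp only [Fin.val_last]
      omega
    rw [hlast, φ0_top, _root_.map_mul, _root_.map_mul, _root_.map_inv, pow_bb,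
      pow_c m' M'' _ 0 i (by simp)]
    have h0j : ∀ hh : ((0 : Fin (m' + 2)) : ℕ) + (j : ℕ) < m' + 2,
        (⟨((0 : Fin (m' + 2)) : ℕ) + (j : ℕ), hh⟩ : Fin (m' + 2)) = j := by
      intro hh
      ext
      simp
    rw [h0j]
  · simp only [MulEquiv.coe_toMonoidHom, MulAut.conj_apply]
    rw [show (FreeGroup.of (Sum.inr u) : G m' M'') = bb m' M'' by cases u; rfl, pow_bb]
    group

lemma φ0_not_inner (k : ℕ) (h0 : 0 < k) (hk : k < m' + 2) (x : G m' M'') :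
    φ0 m' M'' ^ k ≠ MulAut.conj x := by
  intro h
  have h1 : (φ0 m' M'' ^ k) (FreeGroup.of (Sum.inl (0, 0))) =
      x * FreeGroup.of (Sum.inl (0, 0)) * x⁻¹ := by rw [h]; rfl
  rw [pow_c m' M'' k 0 0 (by simpa using hk)] at h1
  have hix : ∀ hh : ((0 : Fin (m' + 2)) : ℕ) + k < m' + 2,
      (⟨((0 : Fin (m' + 2)) : ℕ) + k, hh⟩ : Fin (m' + 2)) = ⟨k, hk⟩ := by
    intro hh
    ext
    simp
  rw [hix] at h1
  have hne : (Sum.inl ((0 : Fin (m' + 2)), (0 : Fin (M'' + 1))) : ι m' M'') ≠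
      Sum.inl (⟨k, hk⟩, 0) := by
    simp only [ne_eq, Sum.inl.injEq, Prod.mk.injEq, not_and]
    intro h' _
    have := congrArg Fin.val h'
    simp at this
    omega
  have h2 := congrArg (FreeGroup.lift (fun y : ι m' M'' =>
    if y = Sum.inl (⟨k, hk⟩, 0) then ofAdd (1 : ℤ) else 1)) h1
  rw [_root_.map_mul, _root_.map_mul, _root_.map_inv, FreeGroup.lift_apply_of, FreeGroup.lift_apply_of,
    if_pos rfl, if_neg hne, mul_one, mul_inv_cancel] at h2
  exact absurd (congrArg Multiplicative.toAdd h2) (by simp)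

/-! ### The isomorphism with `F_M × ℤ` -/

abbrev H := FreeGroup (Fin (M'' + 2))

def aa : H M'' := FreeGroup.of 0

def fimg : ι m' M'' → H M'' × Multiplicative ℤ
  | Sum.inr _ => (aa M'' ^ (m' + 2), ofAdd (-1 : ℤ))
  | Sum.inl (j, i) => (aa M'' ^ (j : ℕ) * FreeGroup.of i.succ * (aa M'' ^ (j : ℕ))⁻¹, 1)

def fhom : G m' M'' →* H M'' × Multiplicative ℤ := FreeGroup.lift (fimg m' M'')

def cc : H M'' × Multiplicative ℤ := (aa M'', 1)

lemma fhom_phi (x : G m' M'') :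
    fhom m' M'' (φ0 m' M'' x) = cc M'' * fhom m' M'' x * (cc M'')⁻¹ := by
  have key : (fhom m' M'').comp (φ0 m' M'').toMonoidHom =
      ((MulAut.conj (cc M'')).toMonoidHom).comp (fhom m' M'') := by
    apply FreeGroup.ext_hom
    rintro (⟨j, i⟩ | u)
    · by_cases h : (j : ℕ) + 1 < m' + 2
      · simp only [MonoidHom.comp_apply, MulEquiv.coe_toMonoidHom, φ0_c m' M'' j i h,
          fhom, FreeGroup.lift_apply_of, fimg, MulAut.conj_apply, cc, Prod.mk_mul_mk, Prod.inv_mk]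
        refine Prod.ext ?_ (by simp)
        show aa M'' ^ ((j : ℕ) + 1) * FreeGroup.of i.succ * (aa M'' ^ ((j : ℕ) + 1))⁻¹ =
          aa M'' * (aa M'' ^ (j : ℕ) * FreeGroup.of i.succ * (aa M'' ^ (j : ℕ))⁻¹) * (aa M'')⁻¹
        group
      · have hj : j = Fin.last (m' + 1) := by ext; simp only [Fin.val_last]; omega
        subst hj
        simp only [MonoidHom.comp_apply, MulEquiv.coe_toMonoidHom, φ0_top, _root_.map_mul,
          _root_.map_inv, fhom, FreeGroup.lift_apply_of, fimg, bb, MulAut.conj_apply, cc,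
          Prod.mk_mul_mk, Prod.inv_mk]
        refine Prod.ext ?_ (by simp)
        simp only [Fin.val_zero, Fin.val_last, pow_zero, one_mul, inv_one, mul_one]
        group
    · cases u
      simp only [MonoidHom.comp_apply, MulEquiv.coe_toMonoidHom, MulAut.conj_apply]
      rw [show (FreeGroup.of (Sum.inr ()) : G m' M'') = bb m' M'' from rfl, φ0_b]
      simp only [fhom, bb, FreeGroup.lift_apply_of, fimg, cc, Prod.mk_mul_mk, Prod.inv_mk]
      refine Prod.ext ?_ (by simp)
      group
  exact DFunLike.congr_fun key x

lemma fhom_inv (x : G m' M'') :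
    fhom m' M'' ((φ0 m' M'')⁻¹ x) = (cc M'')⁻¹ * fhom m' M'' x * cc M'' := by
  have h := fhom_phi m' M'' ((φ0 m' M'')⁻¹ x)
  rw [MulAut.apply_inv_self] at h
  rw [h]
  group

lemma fhom_zpow (z : ℤ) : ∀ x : G m' M'',
    fhom m' M'' ((φ0 m' M'' ^ z) x) = cc M'' ^ z * fhom m' M'' x * (cc M'' ^ z)⁻¹ := by
  induction z using Int.induction_on with
  | zero => intro x; simp
  | succ n ih =>
    intro x
    rw [zpow_add_one, MulAut.mul_apply, ih, fhom_phi]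
    group
  | pred n ih =>
    intro x
    rw [zpow_sub_one, MulAut.mul_apply, ih, fhom_inv]
    group

/-- The forward map of the isomorphism. -/
def Φh : (G m' M'' ⋊[zpowersHom (MulAut (G m' M'')) (φ0 m' M'')] Multiplicative ℤ) →*
    H M'' × Multiplicative ℤ :=
  SemidirectProduct.lift (fhom m' M'') (zpowersHom _ (cc M'')) (by
    intro z
    apply FreeGroup.ext_hom
    intro x
    simp only [MonoidHom.comp_apply, MulEquiv.coe_toMonoidHom, MulAut.conj_apply,
      zpowersHom_apply]
    exact fhom_zpow m' M'' z.toAdd (FreeGroup.of x))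

def ψimg : Fin (M'' + 2) →
    (G m' M'' ⋊[zpowersHom (MulAut (G m' M'')) (φ0 m' M'')] Multiplicative ℤ) := fun x =>
  Fin.cases (SemidirectProduct.inr (ofAdd (1 : ℤ)))
    (fun i => SemidirectProduct.inl (FreeGroup.of (Sum.inl (0, i)))) x

def ψ1 : H M'' →*
    (G m' M'' ⋊[zpowersHom (MulAut (G m' M'')) (φ0 m' M'')] Multiplicative ℤ) :=
  FreeGroup.lift (ψimg m' M'')

def uu : (G m' M'' ⋊[zpowersHom (MulAut (G m' M'')) (φ0 m' M'')] Multiplicative ℤ) :=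
  SemidirectProduct.inl ((bb m' M'')⁻¹) * SemidirectProduct.inr (ofAdd ((m' : ℤ) + 2))

lemma phi_v :
    zpowersHom (MulAut (G m' M'')) (φ0 m' M'') (ofAdd ((m' : ℤ) + 2)) =
      MulAut.conj (bb m' M'') := by
  rw [zpowersHom_apply, toAdd_ofAdd, show ((m' : ℤ) + 2) = ((m' + 2 : ℕ) : ℤ) by push_cast; ring,
    zpow_natCast, φ0_pow_m]

lemma phi_t (n : G m' M'') :
    zpowersHom (MulAut (G m' M'')) (φ0 m' M'') (ofAdd (1 : ℤ)) n = φ0 m' M'' n := by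
  rw [zpowersHom_apply, toAdd_ofAdd, zpow_one]

lemma uu_left : (uu m' M'').left = (bb m' M'')⁻¹ := by
  simp [uu, SemidirectProduct.mul_left]

lemma uu_right : (uu m' M'').right = ofAdd ((m' : ℤ) + 2) := by
  simp [uu, SemidirectProduct.mul_right]

lemma comm_inr_t : Commute (SemidirectProduct.inr (ofAdd (1 : ℤ)) :
    G m' M'' ⋊[zpowersHom (MulAut (G m' M'')) (φ0 m' M'')] Multiplicative ℤ) (uu m' M'') := by
  apply SemidirectProduct.ext
  · simp only [SemidirectProduct.mul_left, SemidirectProduct.left_inr,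
      SemidirectProduct.right_inr, uu_left, uu_right, one_mul, mul_one, phi_t, map_one]
    rw [_root_.map_inv, φ0_b]
    simp
  · simp only [SemidirectProduct.mul_right, SemidirectProduct.right_inr, uu_right]
    exact mul_comm _ _

lemma comm_inl_c (i : Fin (M'' + 1)) :
    Commute (SemidirectProduct.inl (FreeGroup.of (Sum.inl (0, i))) :
      G m' M'' ⋊[zpowersHom (MulAut (G m' M'')) (φ0 m' M'')] Multiplicative ℤ) (uu m' M'') := by
  apply SemidirectProduct.ext
  · simp only [SemidirectProduct.mul_left, SemidirectProduct.left_inl,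
      SemidirectProduct.right_inl, uu_left, uu_right, map_one, MulAut.one_apply, mul_one,
      one_mul, phi_v, MulAut.conj_apply]
    rw [show ((zpowersHom (MulAut (G m' M''))) (φ0 m' M'')) 1 = 1 from map_one _]
    simp only [MulAut.one_apply]
    group
  · simp only [SemidirectProduct.mul_right, SemidirectProduct.right_inl, uu_right, one_mul,
      mul_one]

lemma comm_all (w : H M'') (n : Multiplicative ℤ) :
    Commute (ψ1 m' M'' w) (zpowersHom _ (uu m' M'') n) := by
  have key : Commute (ψ1 m' M'' w) (uu m' M'') := by
    induction w using FreeGroup.induction_on with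
    | C1 => simpa using Commute.one_left _
    | of x =>
      show Commute (ψ1 m' M'' (FreeGroup.of x)) (uu m' M'')
      rw [ψ1, FreeGroup.lift_apply_of]
      induction x using Fin.cases with
      | zero => simpa [ψimg] using comm_inr_t m' M''
      | succ i => simpa [ψimg] using comm_inl_c m' M'' i
    | inv_of x ih =>
      rw [_root_.map_inv]
      exact ih.inv_left
    | mul x y hx hy =>
      rw [_root_.map_mul]
      exact hx.mul_left hy
  rw [zpowersHom_apply]
  exact key.zpow_right _

def Ψh : H M'' × Multiplicative ℤ →*
    (G m' M'' ⋊[zpowersHom (MulAut (G m' M'')) (φ0 m' M'')] Multiplicative ℤ) :=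
  MonoidHom.noncommCoprod (ψ1 m' M'') (zpowersHom _ (uu m' M'')) (comm_all m' M'')

lemma Ψh_apply (x : H M'') (n : Multiplicative ℤ) :
    Ψh m' M'' (x, n) = ψ1 m' M'' x * zpowersHom _ (uu m' M'') n := rfl

lemma ψ1_aa : ψ1 m' M'' (aa M'') = SemidirectProduct.inr (ofAdd (1 : ℤ)) := by
  rw [ψ1, aa, FreeGroup.lift_apply_of]
  simp [ψimg]

lemma ψ1_succ (i : Fin (M'' + 1)) :
    ψ1 m' M'' (FreeGroup.of i.succ) =
      SemidirectProduct.inl (FreeGroup.of (Sum.inl (0, i))) := by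
  rw [ψ1, FreeGroup.lift_apply_of]
  simp [ψimg]

lemma tpow (k : ℕ) : (ofAdd (1 : ℤ)) ^ k = ofAdd (k : ℤ) := by
  induction k with
  | zero => simp
  | succ k ih =>
    rw [pow_succ, ih, ← ofAdd_add]
    try norm_num

lemma ΨΦ : (Ψh m' M'').comp (Φh m' M'') = MonoidHom.id _ := by
  apply SemidirectProduct.hom_ext
  · rw [MonoidHom.comp_assoc]
    rw [show (Φh m' M'').comp SemidirectProduct.inl = fhom m' M'' from
      SemidirectProduct.lift_comp_inl _ _ _]
    apply FreeGroup.ext_hom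
    rintro (⟨j, i⟩ | u)
    · simp only [MonoidHom.comp_apply, MonoidHom.id_apply, fhom, FreeGroup.lift_apply_of, fimg]
      rw [Ψh_apply, _root_.map_one, mul_one, _root_.map_mul, _root_.map_mul, _root_.map_inv,
        map_pow, ψ1_aa, ψ1_succ, ← _root_.map_pow, tpow, ← _root_.map_inv,
        ← SemidirectProduct.inl_aut]
      rw [zpowersHom_apply, toAdd_ofAdd, zpow_natCast, pow_c m' M'' _ 0 i (by simp)]
      rw [show ∀ hh : ((0 : Fin (m' + 2)) : ℕ) + (j : ℕ) < m' + 2,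
          (⟨((0 : Fin (m' + 2)) : ℕ) + (j : ℕ), hh⟩ : Fin (m' + 2)) = j from by
        intro hh; ext; simp]
    · cases u
      simp only [MonoidHom.comp_apply, MonoidHom.id_apply, fhom, FreeGroup.lift_apply_of, fimg]
      rw [Ψh_apply, _root_.map_pow, ψ1_aa, ← _root_.map_pow, tpow, zpowersHom_apply,
        toAdd_ofAdd, zpow_neg_one, uu, mul_inv_rev, ← mul_assoc, ← _root_.map_inv,
        ← _root_.map_mul]
      rw [show (ofAdd ((m' + 2 : ℕ) : ℤ)) * (ofAdd ((m' : ℤ) + 2))⁻¹ = 1 from by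
        rw [show ((m' + 2 : ℕ) : ℤ) = (m' : ℤ) + 2 from by push_cast; ring, mul_inv_cancel]]
      rw [_root_.map_one, one_mul, ← _root_.map_inv, inv_inv]
      rfl
  · rw [MonoidHom.comp_assoc]
    rw [show (Φh m' M'').comp SemidirectProduct.inr = zpowersHom _ (cc M'') from
      SemidirectProduct.lift_comp_inr _ _ _]
    apply MonoidHom.ext_mint
    simp only [MonoidHom.comp_apply, MonoidHom.id_apply, zpowersHom_apply, toAdd_ofAdd,
      zpow_one]
    rw [cc, Ψh_apply, _root_.map_one, mul_one, ψ1_aa]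

lemma Φψ1 (w : H M'') : Φh m' M'' (ψ1 m' M'' w) = (w, (1 : Multiplicative ℤ)) := by
  have h : (Φh m' M'').comp (ψ1 m' M'') = MonoidHom.inl (H M'') (Multiplicative ℤ) := by
    apply FreeGroup.ext_hom
    intro x
    induction x using Fin.cases with
    | zero =>
      simp only [MonoidHom.comp_apply, MonoidHom.inl_apply]
      rw [show (FreeGroup.of (0 : Fin (M'' + 2)) : H M'') = aa M'' from rfl, ψ1_aa,
        Φh, SemidirectProduct.lift_inr, zpowersHom_apply, toAdd_ofAdd, zpow_one]
      rfl
    | succ i =>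
      simp only [MonoidHom.comp_apply, MonoidHom.inl_apply]
      rw [ψ1_succ, Φh, SemidirectProduct.lift_inl, fhom, FreeGroup.lift_apply_of]
      show (aa M'' ^ ((0 : Fin (m' + 2)) : ℕ) * FreeGroup.of i.succ *
        (aa M'' ^ ((0 : Fin (m' + 2)) : ℕ))⁻¹, (1 : Multiplicative ℤ)) = _
      norm_num
  simpa using DFunLike.congr_fun h w

lemma Φuu : Φh m' M'' (uu m' M'') = ((1 : H M''), ofAdd (1 : ℤ)) := by
  rw [uu, _root_.map_mul, Φh, SemidirectProduct.lift_inl, SemidirectProduct.lift_inr,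
    _root_.map_inv, fhom, bb, FreeGroup.lift_apply_of, zpowersHom_apply, toAdd_ofAdd]
  rw [show ((m' : ℤ) + 2) = ((m' + 2 : ℕ) : ℤ) from by push_cast; ring, zpow_natCast]
  simp only [fimg, cc, Prod.pow_mk, Prod.inv_mk, Prod.mk_mul_mk, Prod.mk.injEq]
  constructor
  · group
  · rw [one_pow, mul_one, ← ofAdd_neg]
    norm_num

lemma Φψ2 (n : Multiplicative ℤ) :
    Φh m' M'' (zpowersHom _ (uu m' M'') n) = ((1 : H M''), n) := by
  rw [zpowersHom_apply, map_zpow, Φuu]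
  refine Prod.ext ?_ ?_
  · show (1 : H M'') ^ (toAdd n) = 1
    simp
  · show (ofAdd (1 : ℤ)) ^ (toAdd n) = n
    rw [← ofAdd_zsmul]
    simp

lemma ΦΨ (p : H M'' × Multiplicative ℤ) : Φh m' M'' (Ψh m' M'' p) = p := by
  obtain ⟨w, n⟩ := p
  rw [Ψh_apply, _root_.map_mul, Φψ1, Φψ2, Prod.mk_mul_mk, mul_one, one_mul]

/-- The isomorphism. -/
def iso0 : (G m' M'' ⋊[zpowersHom (MulAut (G m' M'')) (φ0 m' M'')] Multiplicative ℤ) ≃*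
    H M'' × Multiplicative ℤ where
  toFun := Φh m' M''
  invFun := Ψh m' M''
  left_inv := fun s => by
    have := DFunLike.congr_fun (ΨΦ m' M'') s
    simpa using this
  right_inv := ΦΨ m' M''
  map_mul' := map_mul _

section Transport

variable {A B : Type*} [Group A] [Group B]

lemma zpow_transfer (c : A ≃* B) (φA : MulAut A) (φB : MulAut B)
    (hc : ∀ x, c (φA x) = φB (c x)) :
    ∀ (z : ℤ) (x : A), c ((φA ^ z) x) = (φB ^ z) (c x) := by
  have hinv : ∀ x, c (φA⁻¹ x) = φB⁻¹ (c x) := by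
    intro x
    have h := hc (φA⁻¹ x)
    rw [MulAut.apply_inv_self] at h
    rw [h]
    exact (MulAut.inv_apply_self (M := B) φB (c (φA⁻¹ x))).symm
  intro z
  induction z using Int.induction_on with
  | zero => intro x; simp
  | succ n ih =>
    intro x
    rw [zpow_add_one, MulAut.mul_apply, ih, hc, ← MulAut.mul_apply, ← zpow_add_one]
  | pred n ih =>
    intro x
    rw [zpow_sub_one, MulAut.mul_apply, ih, hinv, ← MulAut.mul_apply, ← zpow_sub_one]

/-- Transport of a mapping-torus semidirect product along an isomorphism. -/
def sdCongr (c : A ≃* B) (φA : MulAut A) (φB : MulAut B)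
    (hc : ∀ x, c (φA x) = φB (c x)) :
    (A ⋊[zpowersHom (MulAut A) φA] Multiplicative ℤ) ≃*
      (B ⋊[zpowersHom (MulAut B) φB] Multiplicative ℤ) := by
  have hc' : ∀ x, c.symm (φB x) = φA (c.symm x) := by
    intro x
    have h := hc (c.symm x)
    rw [MulEquiv.apply_symm_apply] at h
    rw [← h, MulEquiv.symm_apply_apply]
  refine MonoidHom.toMulEquiv
    (SemidirectProduct.lift (SemidirectProduct.inl.comp c.toMonoidHom) SemidirectProduct.inr ?_)
    (SemidirectProduct.lift (SemidirectProduct.inl.comp c.symm.toMonoidHom)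
      SemidirectProduct.inr ?_) ?_ ?_
  · intro z
    apply MonoidHom.ext
    intro x
    simp only [MonoidHom.comp_apply, MulEquiv.coe_toMonoidHom, MulAut.conj_apply]
    rw [show (zpowersHom (MulAut A) φA z) x = (φA ^ z.toAdd) x from rfl,
      zpow_transfer c φA φB hc,
      show (φB ^ z.toAdd) (c x) = (zpowersHom (MulAut B) φB z) (c x) from rfl,
      SemidirectProduct.inl_aut, _root_.map_inv]
  · intro z
    apply MonoidHom.ext
    intro x
    simp only [MonoidHom.comp_apply, MulEquiv.coe_toMonoidHom, MulAut.conj_apply]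
    rw [show (zpowersHom (MulAut B) φB z) x = (φB ^ z.toAdd) x from rfl,
      zpow_transfer c.symm φB φA hc',
      show (φA ^ z.toAdd) (c.symm x) = (zpowersHom (MulAut A) φA z) (c.symm x) from rfl,
      SemidirectProduct.inl_aut, _root_.map_inv]
  · apply SemidirectProduct.hom_ext
    · apply MonoidHom.ext
      intro x
      simp
    · apply MonoidHom.ext
      intro z
      simp
  · apply SemidirectProduct.hom_ext
    · apply MonoidHom.ext
      intro x
      simp
    · apply MonoidHom.ext
      intro z
      simp

lemma congr_conj (ϕ : A ≃* B) (y : A) :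
    MulAut.congr ϕ (MulAut.conj y) = MulAut.conj (ϕ y) := by
  ext z
  simp [MulAut.conj_apply]

end Transport

end Stmt13

/-- For `m, M ≥ 2` and `N = m(M-1)+1` there is an automorphism `φ` of `F_N` such that
`F_N ⋊_φ ℤ ≅ F_M × ℤ` and the image of `φ` in `Out(F_N)` has order `m`. -/
theorem stmt_13 (m M : ℕ) (hm : 2 ≤ m) (hM : 2 ≤ M) :
    ∃ φ : MulAut (FreeGroup (Fin (m * (M - 1) + 1))),
      Nonempty
          ((FreeGroup (Fin (m * (M - 1) + 1))
              ⋊[zpowersHom (MulAut (FreeGroup (Fin (m * (M - 1) + 1)))) φ]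
                Multiplicative ℤ) ≃*
            (FreeGroup (Fin M) × Multiplicative ℤ)) ∧
        (∃ x : FreeGroup (Fin (m * (M - 1) + 1)), φ ^ m = MulAut.conj x) ∧
        ∀ k : ℕ, 0 < k → k < m →
          ∀ x : FreeGroup (Fin (m * (M - 1) + 1)), φ ^ k ≠ MulAut.conj x := by
  obtain ⟨m', rfl⟩ : ∃ m', m = m' + 2 := ⟨m - 2, by omega⟩
  obtain ⟨M'', rfl⟩ : ∃ M'', M = M'' + 2 := ⟨M - 2, by omega⟩
  let e : Fin ((m' + 2) * (M'' + 2 - 1) + 1) ≃ Stmt13.ι m' M'' :=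
    finSumFinEquiv.symm.trans (Equiv.sumCongr finProdFinEquiv.symm finOneEquiv)
  let c : FreeGroup (Fin ((m' + 2) * (M'' + 2 - 1) + 1)) ≃* Stmt13.G m' M'' :=
    FreeGroup.freeGroupCongr e
  have hc : ∀ x, c ((MulAut.congr c.symm) (Stmt13.φ0 m' M'') x) = Stmt13.φ0 m' M'' (c x) := by
    intro x
    simp [MulAut.congr_apply]
  refine ⟨(MulAut.congr c.symm) (Stmt13.φ0 m' M''), ⟨?_⟩, ⟨c.symm (Stmt13.bb m' M''), ?_⟩, ?_⟩
  · exact (Stmt13.sdCongr c _ _ hc).trans (Stmt13.iso0 m' M'')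
  · rw [← map_pow, Stmt13.φ0_pow_m, Stmt13.congr_conj]
  · intro k hk0 hkm x h
    refine Stmt13.φ0_not_inner m' M'' k hk0 hkm (c x) ?_
    have h2 := congrArg (MulAut.congr c.symm).symm (congrArg (fun ψ => ψ) h)
    rw [← map_pow, MulEquiv.symm_apply_apply] at h2
    rw [h2]
    rw [show MulAut.conj x = MulAut.congr c.symm (MulAut.conj (c x)) from by
      rw [Stmt13.congr_conj]; simp, MulEquiv.symm_apply_apply]
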